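/- Computation-corruption bound (ν part of the negligible security error lemma): Let N, d, m be natural numbers with d ≤ N, m ≤ N, and let c ∈ [0, 1/2). Let Z₁ be distributed according to the hypergeometric distribution with population N, m marked items, and d draws (the number of attacked computation rounds under a uniformly random partition), and conditionally on Z₁ = z let Z₂ be binomial with d − z trials and success probability c (the unattacked computation rounds that fail due to the inherent BQP error). Then for every real χ with 0 ≤ χ ≤ (1 − 2c)/(2 − 2c) − m/N, the probability that Z₁ + Z₂ > d/2 satisfies Pr[Z₁ + Z₂ > d/2] ≤ exp(−2·χ²·d) + exp(−2·((1 − m/N − χ)·(1 − c) − 1/2)² · d / (1 − m/N − χ)). -/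

import Mathlib

open Finset

/-- The hypergeometric mass function: population `N`, `K` marked items, `n` draws. -/
noncomputable def hypergeomPMF (N K n j : ℕ) : ℝ :=
  ((K.choose j : ℝ) * ((N - K).choose (n - j) : ℝ)) / (N.choose n : ℝ)

/-- The binomial mass function with `t` trials and success probability `p`. -/
noncomputable def binomPMF (t : ℕ) (p : ℝ) (j : ℕ) : ℝ :=
  (t.choose j : ℝ) * p ^ j * (1 - p) ^ (t - j)

lemma desc_mul_pow_le {m N : ℕ} (h : m ≤ N) :
    ∀ k, m.descFactorial k * N ^ k ≤ N.descFactorial k * m ^ k := by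
  intro k
  induction k with
  | zero => simp
  | succ k ih =>
    rw [Nat.descFactorial_succ, Nat.descFactorial_succ, pow_succ, pow_succ]
    have h1 : (m - k) * N ≤ (N - k) * m := by
      rcases le_or_gt k m with hk | hk
      · have : k * m ≤ k * N := Nat.mul_le_mul_left k h
        calc (m - k) * N = m * N - k * N := by rw [Nat.sub_mul]
          _ ≤ m * N - k * m := Nat.sub_le_sub_left (Nat.mul_le_mul_left k h) _
          _ = N * m - k * m := by rw [Nat.mul_comm]
          _ = (N - k) * m := by rw [Nat.sub_mul]
      · simp [Nat.sub_eq_zero_of_le hk.le]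
    calc m.descFactorial (k+1) * (N ^ k * N)
        = ((m - k) * N) * (m.descFactorial k * N ^ k) := by
          rw [Nat.descFactorial_succ]; ring
      _ ≤ ((N - k) * m) * (N.descFactorial k * m ^ k) := Nat.mul_le_mul h1 ih
      _ = (N - k) * N.descFactorial k * (m ^ k * m) := by ring

lemma choose_mul_pow_le {m N : ℕ} (h : m ≤ N) (k : ℕ) :
    m.choose k * N ^ k ≤ N.choose k * m ^ k := by
  have h1 := desc_mul_pow_le h k
  rw [Nat.descFactorial_eq_factorial_mul_choose, Nat.descFactorial_eq_factorial_mul_choose] at h1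
  have h2 : Nat.factorial k * (m.choose k * N ^ k) ≤ Nat.factorial k * (N.choose k * m ^ k) := by
    calc Nat.factorial k * (m.choose k * N ^ k) = Nat.factorial k * m.choose k * N ^ k := by ring
      _ ≤ Nat.factorial k * N.choose k * m ^ k := h1
      _ = Nat.factorial k * (N.choose k * m ^ k) := by ring
  exact Nat.le_of_mul_le_mul_left h2 (Nat.factorial_pos k)

lemma choose_mul_choose_aux {m k : ℕ} (hk : k ≤ m) (i : ℕ) :
    m.choose (k + i) * (k + i).choose k = m.choose k * (m - k).choose i := by
  rcases le_or_gt (k + i) m with h | h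
  · have := Nat.choose_mul (n := m) (k := k + i) (s := k) (Nat.le_add_right _ _)
    rw [this, Nat.add_sub_cancel_left]
  · rw [Nat.choose_eq_zero_of_lt h, Nat.choose_eq_zero_of_lt (by omega : m - k < i),
      Nat.zero_mul, Nat.mul_zero]

lemma hyp_moment_id (N m d k : ℕ) (hm : m ≤ N) (hkd : k ≤ d) :
    ∑ j ∈ range (d + 1), m.choose j * (N - m).choose (d - j) * j.choose k
      = m.choose k * (N - k).choose (d - k) := by
  rcases lt_or_ge m k with hmk | hkm
  · rw [Nat.choose_eq_zero_of_lt hmk, Nat.zero_mul]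
    apply Finset.sum_eq_zero
    intro j hj
    rcases lt_or_ge j k with hjk | hjk
    · rw [Nat.choose_eq_zero_of_lt hjk, Nat.mul_zero]
    · rw [Nat.choose_eq_zero_of_lt (lt_of_lt_of_le hmk hjk), Nat.zero_mul, Nat.zero_mul]
  · -- terms with j < k vanish
    rw [Finset.range_eq_Ico, ← Finset.sum_Ico_consecutive _ (Nat.zero_le k) (by omega : k ≤ d + 1)]
    rw [Finset.sum_eq_zero (fun j hj => by
      rw [Nat.choose_eq_zero_of_lt (Finset.mem_Ico.mp hj).2, Nat.mul_zero]), zero_add]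
    rw [Finset.sum_Ico_eq_sum_range]
    have hlen : d + 1 - k = (d - k) + 1 := by omega
    rw [hlen]
    have key : ∀ i ∈ range (d - k + 1),
        m.choose (k + i) * (N - m).choose (d - (k + i)) * (k + i).choose k
          = m.choose k * ((m - k).choose i * (N - m).choose (d - k - i)) := by
      intro i hi
      have : d - (k + i) = d - k - i := by omega
      rw [this, mul_right_comm, choose_mul_choose_aux hkm i]
      ring
    rw [Finset.sum_congr rfl key, ← Finset.mul_sum]
    congr 1
    have hv := Nat.add_choose_eq (m - k) (N - m) (d - k)
    rw [Finset.Nat.sum_antidiagonal_eq_sum_range_succ_mk] at hv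
    have : m - k + (N - m) = N - k := by omega
    rw [this] at hv
    exact hv.symm


lemma hypergeomPMF_nonneg (N K n j : ℕ) : 0 ≤ hypergeomPMF N K n j := by
  unfold hypergeomPMF; positivity

lemma binomPMF_nonneg (t : ℕ) {p : ℝ} (h0 : 0 ≤ p) (h1 : p ≤ 1) (j : ℕ) :
    0 ≤ binomPMF t p j := by
  unfold binomPMF
  have : (0:ℝ) ≤ 1 - p := by linarith
  positivity

lemma binom_mgf (t : ℕ) (p x : ℝ) :
    ∑ j ∈ range (t + 1), binomPMF t p j * x ^ j = (1 - p + p * x) ^ t := by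
  have h := add_pow (p * x) (1 - p) t
  rw [show p * x + (1 - p) = 1 - p + p * x by ring] at h
  rw [h]
  apply Finset.sum_congr rfl
  intro j hj
  unfold binomPMF
  ring

lemma hyp_total (N m d : ℕ) (hd : d ≤ N) (hm : m ≤ N) :
    ∑ j ∈ range (d + 1), hypergeomPMF N m d j = 1 := by
  have key := hyp_moment_id N m d 0 hm (Nat.zero_le d)
  simp only [Nat.choose_zero_right, Nat.mul_one, Nat.sub_zero, Nat.one_mul] at key
  have hpos : 0 < N.choose d := Nat.choose_pos hd
  unfold hypergeomPMF
  rw [← Finset.sum_div]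
  rw [div_eq_one_iff_eq (by exact_mod_cast hpos.ne')]
  rw [← key]
  push_cast
  ring_nf

lemma hyp_mgf (N m d : ℕ) (hN : 0 < N) (hd : d ≤ N) (hm : m ≤ N) (x : ℝ) (hx : 1 ≤ x) :
    ∑ j ∈ range (d + 1), hypergeomPMF N m d j * x ^ j
      ≤ (1 - (m : ℝ) / N + (m : ℝ) / N * x) ^ d := by
  have hNd : (0:ℝ) < N.choose d := by exact_mod_cast Nat.choose_pos hd
  have hu : 0 ≤ x - 1 := by linarith
  -- expand x^j
  have expand : ∀ j ∈ range (d + 1),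
      hypergeomPMF N m d j * x ^ j
        = ∑ k ∈ range (d + 1), hypergeomPMF N m d j * ((j.choose k : ℝ) * (x - 1) ^ k) := by
    intro j hj
    have hxj : x ^ j = ∑ k ∈ range (j + 1), (x - 1) ^ k * 1 ^ (j - k) * (j.choose k : ℝ) := by
      have := add_pow (x - 1) (1:ℝ) j
      rw [show x - 1 + 1 = x by ring] at this
      exact this
    have hsub : range (j + 1) ⊆ range (d + 1) := by
      apply Finset.range_subset_range.mpr
      have := Finset.mem_range.mp hj
      omega
    rw [hxj, Finset.sum_subset hsub (fun k _ hk => by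
      rw [Nat.choose_eq_zero_of_lt (by simpa using (Finset.mem_range.not.mp hk))]
      simp), Finset.mul_sum]
    apply Finset.sum_congr rfl
    intro k hk
    ring
  rw [Finset.sum_congr rfl expand, Finset.sum_comm]
  -- inner sums: ∑_j hyp_j * C(j,k) = C(m,k)*C(d,k)/C(N,k)
  have inner : ∀ k ∈ range (d + 1),
      ∑ j ∈ range (d + 1), hypergeomPMF N m d j * ((j.choose k : ℝ) * (x - 1) ^ k)
        = ((m.choose k : ℝ) * (d.choose k : ℝ) / (N.choose k : ℝ)) * (x - 1) ^ k := by
    intro k hk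
    have hkd : k ≤ d := Nat.lt_succ_iff.mp (Finset.mem_range.mp hk)
    have hNk : (0:ℝ) < (N.choose k : ℝ) := by exact_mod_cast Nat.choose_pos (hkd.trans hd)
    have step1 : ∀ j ∈ range (d+1), hypergeomPMF N m d j * ((j.choose k : ℝ) * (x-1)^k)
        = ((m.choose j * (N-m).choose (d-j) * j.choose k : ℕ) : ℝ) / (N.choose d) * (x-1)^k := by
      intro j hj; unfold hypergeomPMF; push_cast; ring
    rw [Finset.sum_congr rfl step1, ← Finset.sum_mul, ← Finset.sum_div, ← Nat.cast_sum]
    rw [hyp_moment_id N m d k hm hkd]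
    congr 1
    have hrelR : ((N.choose d : ℝ)) * (d.choose k) = (N.choose k) * ((N-k).choose (d-k)) := by
      exact_mod_cast Nat.choose_mul (n := N) (k := d) (s := k) hkd
    rw [div_eq_div_iff hNd.ne' hNk.ne']
    push_cast
    nlinarith [hrelR]
  rw [Finset.sum_congr rfl inner]
  have hrhs : (1 - (m:ℝ)/N + (m:ℝ)/N * x) ^ d
      = ∑ k ∈ range (d+1), (d.choose k : ℝ) * ((m:ℝ)/N)^k * (x-1)^k := by
    have h2 := add_pow ((m:ℝ)/N * (x-1)) (1:ℝ) d
    rw [show (m:ℝ)/N * (x-1) + 1 = 1 - (m:ℝ)/N + (m:ℝ)/N * x by ring] at h2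
    rw [h2]
    apply Finset.sum_congr rfl; intro k hk; rw [mul_pow]; ring
  rw [hrhs]
  apply Finset.sum_le_sum
  intro k hk
  have hkd : k ≤ d := Nat.lt_succ_iff.mp (Finset.mem_range.mp hk)
  have hNk : (0:ℝ) < (N.choose k : ℝ) := by exact_mod_cast Nat.choose_pos (hkd.trans hd)
  have hcast : (m.choose k : ℝ) * (N:ℝ)^k ≤ (N.choose k : ℝ) * (m:ℝ)^k := by
    exact_mod_cast choose_mul_pow_le hm k
  have hfrac : (m.choose k : ℝ) / (N.choose k : ℝ) ≤ ((m:ℝ)/N)^k := by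
    rw [div_pow, div_le_div_iff₀ hNk (by positivity)]
    nlinarith [hcast]
  calc (m.choose k:ℝ) * (d.choose k) / (N.choose k) * (x-1)^k
      = ((m.choose k:ℝ)/(N.choose k)) * ((d.choose k) * (x-1)^k) := by ring
    _ ≤ ((m:ℝ)/N)^k * ((d.choose k) * (x-1)^k) := by
        apply mul_le_mul_of_nonneg_right hfrac (by positivity)
    _ = (d.choose k:ℝ) * ((m:ℝ)/N)^k * (x-1)^k := by ring
lemma logG_aux {p : ℝ} (hp : 0 < p) (hp1 : p < 1) {t : ℝ} (ht : 0 ≤ t) (ht1 : t < 1 - p) :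
    p * (1 - p - t) * Real.exp (4 * t) ≤ (p + t) * (1 - p) := by
  set G : ℝ → ℝ := fun s => Real.log (p + s) - Real.log (1 - p - s) - 4 * s with hG
  have hderiv : ∀ s ∈ Set.Icc (0:ℝ) t, HasDerivAt G (1/(p+s) + 1/(1-p-s) - 4) s := by
    intro s hs
    obtain ⟨hs0, hst⟩ := hs
    have hps : 0 < p + s := by linarith
    have h1ps : 0 < 1 - p - s := by linarith
    have d1 : HasDerivAt (fun s : ℝ => Real.log (p + s)) (1/(p+s)) s := by
      have := ((hasDerivAt_id s).const_add p).log hps.ne'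
      simpa using this
    have d2 : HasDerivAt (fun s : ℝ => Real.log (1 - p - s)) (-1/(1-p-s)) s := by
      have hin : HasDerivAt (fun s : ℝ => 1 - p - s) (-1) s := by
        simpa using ((hasDerivAt_id s).const_sub (1-p))
      have := hin.log h1ps.ne'
      simpa using this
    have d3 : HasDerivAt (fun s : ℝ => 4 * s) 4 s := by
      simpa using (hasDerivAt_id s).const_mul 4
    have := (d1.sub d2).sub d3
    exact this.congr_deriv (by ring)
  have hmono : MonotoneOn G (Set.Icc 0 t) := by
    apply monotoneOn_of_deriv_nonneg (convex_Icc 0 t)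
    · intro s hs
      exact (hderiv s hs).continuousAt.continuousWithinAt
    · intro s hs
      rw [interior_Icc] at hs
      exact (hderiv s (Set.mem_Icc_of_Ioo hs)).differentiableAt.differentiableWithinAt
    · intro s hs
      rw [interior_Icc] at hs
      rw [(hderiv s (Set.mem_Icc_of_Ioo hs)).deriv]
      obtain ⟨hs0, hst⟩ := hs
      have hps : 0 < p + s := by linarith
      have h1ps : 0 < 1 - p - s := by linarith
      have key : (p+s) * (1-p-s) ≤ 1/4 := by nlinarith [sq_nonneg (p + s - (1 - p - s))]
      have h4 : 4 ≤ 1/(p+s) + 1/(1-p-s) := by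
        rw [div_add_div _ _ hps.ne' h1ps.ne']
        rw [le_div_iff₀ (by positivity)]
        nlinarith
      linarith
  have hGle : G 0 ≤ G t := hmono (Set.left_mem_Icc.mpr ht) (Set.right_mem_Icc.mpr ht) ht
  have hps : 0 < p + t := by linarith
  have h1pt : 0 < 1 - p - t := by linarith
  -- G 0 = log p - log (1-p), rearrange
  have hlog : Real.log (p * (1 - p - t)) + 4 * t ≤ Real.log ((p + t) * (1 - p)) := by
    rw [Real.log_mul hp.ne' h1pt.ne', Real.log_mul hps.ne' (by linarith : (1:ℝ)-p ≠ 0)]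
    simp only [hG] at hGle
    simp only [sub_zero, add_zero, mul_zero] at hGle
    linarith
  have := Real.exp_le_exp.mpr hlog
  rw [Real.exp_add, Real.exp_log (mul_pos hp h1pt), Real.exp_log (mul_pos hps (by linarith : (0:ℝ) < 1 - p))] at this
  linarith

lemma bern_mgf {p t : ℝ} (hp0 : 0 ≤ p) (hp1 : p ≤ 1) (ht : 0 ≤ t) :
    1 - p + p * Real.exp (4 * t) ≤ Real.exp (4 * t * p + 2 * t ^ 2) := by
  rcases eq_or_lt_of_le hp0 with hp0' | hp0'
  · simp only [← hp0', sub_zero, zero_mul, add_zero, mul_zero, zero_add]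
    exact Real.one_le_exp (by positivity)
  rcases eq_or_lt_of_le hp1 with hp1' | hp1'
  · subst hp1'
    simp only [sub_self, zero_add, one_mul, mul_one]
    exact Real.exp_le_exp.mpr (by nlinarith)
  -- 0 < p < 1
  set F : ℝ → ℝ := fun s => 4 * s * p + 2 * s ^ 2 - Real.log (1 - p + p * Real.exp (4 * s))
    with hF
  have hDpos : ∀ s : ℝ, 0 < 1 - p + p * Real.exp (4 * s) := by
    intro s
    have := Real.exp_pos (4 * s)
    nlinarith
  have hderiv : ∀ s : ℝ,
      HasDerivAt F (4 * p + 4 * s - p * (4 * Real.exp (4 * s)) / (1 - p + p * Real.exp (4 * s))) s := by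
    intro s
    have d0 : HasDerivAt (fun s : ℝ => 4 * s) 4 s := by
      simpa using (hasDerivAt_id s).const_mul 4
    have dexp : HasDerivAt (fun s : ℝ => Real.exp (4 * s)) (Real.exp (4 * s) * 4) s := d0.exp
    have dD : HasDerivAt (fun s : ℝ => 1 - p + p * Real.exp (4 * s))
        (p * (4 * Real.exp (4 * s))) s := by
      have := (dexp.const_mul p).const_add (1 - p)
      exact this.congr_deriv (by ring)
    have dlog := dD.log (hDpos s).ne'
    have dpoly : HasDerivAt (fun s : ℝ => 4 * s * p + 2 * s ^ 2) (4 * p + 4 * s) s := by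
      have h1 : HasDerivAt (fun s : ℝ => 4 * s * p) (4 * p) s := by
        have h := ((hasDerivAt_id s).const_mul 4).mul_const p
        simpa using h
      have h2 : HasDerivAt (fun s : ℝ => 2 * s ^ 2) (2 * (2 * s)) s := by
        simpa using ((hasDerivAt_pow 2 s).const_mul 2)
      exact (h1.add h2).congr_deriv (by ring)
    have := dpoly.sub dlog
    exact this
  have hmono : MonotoneOn F (Set.Ici (0:ℝ)) := by
    apply monotoneOn_of_deriv_nonneg (convex_Ici 0)
    · intro s _; exact (hderiv s).continuousAt.continuousWithinAt
    · intro s _; exact (hderiv s).differentiableAt.differentiableWithinAt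
    · intro s hs
      rw [interior_Ici] at hs
      have hs0 : 0 < s := hs
      rw [(hderiv s).deriv]
      have hD := hDpos s
      rw [sub_nonneg, div_le_iff₀ hD]
      have hkey : p * Real.exp (4 * s) * (1 - p - s) ≤ (p + s) * (1 - p) := by
        rcases lt_or_ge s (1 - p) with hcase | hcase
        · have := logG_aux hp0' hp1' hs0.le hcase
          nlinarith
        · have h1 : 1 - p - s ≤ 0 := by linarith
          have h2 : (0:ℝ) < p * Real.exp (4 * s) := by positivity
          nlinarith
      nlinarith [Real.exp_pos (4 * s)]
  have hF0 : F 0 = 0 := by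
    simp [hF]
  have hFt : 0 ≤ F t := by
    rw [← hF0]
    exact hmono (Set.mem_Ici.mpr le_rfl) (Set.mem_Ici.mpr ht) ht
  have hlog : Real.log (1 - p + p * Real.exp (4 * t)) ≤ 4 * t * p + 2 * t ^ 2 := by
    simp only [hF] at hFt; linarith
  calc 1 - p + p * Real.exp (4*t)
      = Real.exp (Real.log (1 - p + p * Real.exp (4*t))) := (Real.exp_log (hDpos t)).symm
    _ ≤ _ := Real.exp_le_exp.mpr hlog

lemma chernoff_tail (n : ℕ) (hn : 0 < n) (p : ℝ) (hp0 : 0 ≤ p) (hp1 : p ≤ 1)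
    (w : ℕ → ℝ) (hw : ∀ j ∈ range (n+1), 0 ≤ w j)
    (hmgf : ∀ x : ℝ, 1 ≤ x → ∑ j ∈ range (n+1), w j * x ^ j ≤ (1 - p + p * x) ^ n)
    (s : ℝ) (hs : p * n ≤ s) :
    ∑ j ∈ range (n+1), (if s < (j:ℝ) then w j else 0)
      ≤ Real.exp (-2 * (s - p * n) ^ 2 / n) := by
  have hnR : (0:ℝ) < n := by exact_mod_cast hn
  set t : ℝ := (s - p * n) / n with htdef
  have ht0 : 0 ≤ t := div_nonneg (by linarith) hnR.le
  have hx1 : (1:ℝ) ≤ Real.exp (4 * t) := Real.one_le_exp (by positivity)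
  have step1 : ∀ j ∈ range (n+1),
      (if s < (j:ℝ) then w j else 0) ≤ w j * Real.exp (4 * t * ((j:ℝ) - s)) := by
    intro j hj
    split_ifs with h
    · nth_rewrite 1 [show w j = w j * 1 by ring]
      exact mul_le_mul_of_nonneg_left (Real.one_le_exp (by nlinarith)) (hw j hj)
    · have := hw j hj
      positivity
  calc ∑ j ∈ range (n+1), (if s < (j:ℝ) then w j else 0)
      ≤ ∑ j ∈ range (n+1), w j * Real.exp (4 * t * ((j:ℝ) - s)) :=
        Finset.sum_le_sum step1
    _ = Real.exp (-(4 * t * s)) * ∑ j ∈ range (n+1), w j * (Real.exp (4 * t)) ^ j := by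
        rw [Finset.mul_sum]
        apply Finset.sum_congr rfl
        intro j hj
        rw [show Real.exp (-(4*t*s)) * (w j * Real.exp (4*t) ^ j)
              = w j * (Real.exp (-(4*t*s)) * Real.exp (4*t) ^ j) by ring,
          ← Real.exp_nat_mul, ← Real.exp_add,
          show -(4*t*s) + (j:ℝ)*(4*t) = 4*t*((j:ℝ)-s) by ring]
    _ ≤ Real.exp (-(4 * t * s)) * (1 - p + p * Real.exp (4 * t)) ^ n := by
        apply mul_le_mul_of_nonneg_left (hmgf _ hx1) (Real.exp_nonneg _)
    _ ≤ Real.exp (-(4 * t * s)) * (Real.exp (4 * t * p + 2 * t ^ 2)) ^ n := by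
        apply mul_le_mul_of_nonneg_left _ (Real.exp_nonneg _)
        apply pow_le_pow_left₀ _ (bern_mgf hp0 hp1 ht0)
        have := Real.exp_pos (4 * t)
        nlinarith
    _ = Real.exp (-(4 * t * s) + n * (4 * t * p + 2 * t ^ 2)) := by
        rw [← Real.exp_nat_mul, ← Real.exp_add]
    _ = Real.exp (-2 * (s - p * n) ^ 2 / n) := by
        congr 1
        rw [htdef]
        field_simp
        ring

lemma gmono {c d ν n : ℝ} (hd : 0 ≤ d) (hν : 0 < ν) (hνn : ν ≤ n)
    (hν2 : d / 2 ≤ ν * (1 - c)) :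
    (ν * (1 - c) - d / 2) ^ 2 / ν ≤ (n * (1 - c) - d / 2) ^ 2 / n := by
  have hn : 0 < n := lt_of_lt_of_le hν hνn
  rw [div_le_div_iff₀ hν hn]
  have h1 : 0 ≤ ν * (1 - c) := le_trans (by linarith) hν2
  have h2 : ν * (1 - c) ≤ n * (1 - c) := by
    rcases le_or_gt 0 (1 - c) with h | h
    · exact mul_le_mul_of_nonneg_right hνn h
    · nlinarith
  have key : d ^ 2 / 4 ≤ (ν * (1 - c)) * (n * (1 - c)) := by nlinarith
  nlinarith [mul_nonneg (sub_nonneg.mpr hνn) (sub_nonneg.mpr key)]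

set_option maxHeartbeats 1000000 in
/-- **Computation-corruption bound** (the ν part of the negligible security error
lemma): let `Z₁ ~ Hypergeometric(N, m, d)` be the number of attacked computation
rounds, and conditionally on `Z₁ = z` let `Z₂ ~ Binomial(d − z, c)` count the
unattacked rounds failing due to the inherent BQP error `c < 1/2`. Then for
`0 ≤ χ ≤ (1 − 2c)/(2 − 2c) − m/N`,
`Pr[Z₁ + Z₂ > d/2] ≤ exp(−2χ²d) + exp(−2((1 − m/N − χ)(1 − c) − 1/2)²·d/(1 − m/N − χ))`. -/
theorem computation_corruption_bound (N d m : ℕ) (hd : d ≤ N) (hm : m ≤ N)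
    (c : ℝ) (hc0 : 0 ≤ c) (hc1 : c < 1 / 2)
    (χ : ℝ) (hχ0 : 0 ≤ χ)
    (hχ1 : χ ≤ (1 - 2 * c) / (2 - 2 * c) - (m : ℝ) / N) :
    (∑ z₁ ∈ Finset.range (d + 1), ∑ z₂ ∈ Finset.range (d - z₁ + 1),
        if (d : ℝ) / 2 < (z₁ : ℝ) + (z₂ : ℝ) then
          hypergeomPMF N m d z₁ * binomPMF (d - z₁) c z₂
        else 0)
      ≤ Real.exp (-2 * χ ^ 2 * d)
        + Real.exp (-2 * ((1 - (m : ℝ) / N - χ) * (1 - c) - 1 / 2) ^ 2 * d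
            / (1 - (m : ℝ) / N - χ)) := by
  rcases Nat.eq_zero_or_pos d with hd0 | hd0
  · subst hd0
    simp only [Nat.zero_sub, Nat.cast_ofNat, Nat.cast_zero]
    norm_num
  have hN : 0 < N := lt_of_lt_of_le hd0 hd
  have hNR : (0:ℝ) < N := by exact_mod_cast hN
  have hdR : (0:ℝ) < d := by exact_mod_cast hd0
  set p : ℝ := (m:ℝ)/N with hpdef
  have hp0 : 0 ≤ p := by positivity
  have hp1 : p ≤ 1 := by
    rw [hpdef, div_le_one hNR]; exact_mod_cast hm
  have hc1' : c ≤ 1 := by linarith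
  have h2c : (0:ℝ) < 2 - 2*c := by linarith
  set a : ℝ := 1 - p - χ with hadef
  have hafrac : 1/(2-2*c) ≤ a := by
    have h1 : (1-2*c)/(2-2*c) + 1/(2-2*c) = 1 := by rw [← add_div, div_eq_one_iff_eq h2c.ne']; ring
    have h2 : p + χ ≤ (1-2*c)/(2-2*c) := by rw [hpdef]; linarith
    rw [hadef]; linarith
  have ha0 : 0 < a := lt_of_lt_of_le (by positivity) hafrac
  have ha12 : 1/2 ≤ a * (1-c) := by
    have h1 : (1-c)/(2-2*c) = 1/2 := by rw [div_eq_iff h2c.ne']; ring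
    have h2 : 1/(2-2*c) * (1-c) ≤ a * (1-c) :=
      mul_le_mul_of_nonneg_right hafrac (by linarith)
    have h3 : 1/(2-2*c) * (1-c) = (1-c)/(2-2*c) := by ring
    linarith
  set Bexp : ℝ := Real.exp (-2 * (a * (1 - c) - 1 / 2) ^ 2 * (d:ℝ) / a) with hBdef
  have hBnonneg : 0 ≤ Bexp := Real.exp_nonneg _
  -- inner sum manipulation
  have hw : ∀ j ∈ range (d+1), 0 ≤ hypergeomPMF N m d j :=
    fun j _ => hypergeomPMF_nonneg N m d j
  -- the inner probability
  set I : ℕ → ℝ := fun z₁ =>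
    ∑ z₂ ∈ range (d - z₁ + 1),
      if (d : ℝ) / 2 < (z₁ : ℝ) + (z₂ : ℝ) then binomPMF (d - z₁) c z₂ else 0 with hIdef
  have hfacto : ∀ z₁ ∈ range (d+1),
      (∑ z₂ ∈ range (d - z₁ + 1),
        if (d : ℝ) / 2 < (z₁ : ℝ) + (z₂ : ℝ) then
          hypergeomPMF N m d z₁ * binomPMF (d - z₁) c z₂ else 0)
      = hypergeomPMF N m d z₁ * I z₁ := by
    intro z₁ _
    rw [hIdef, Finset.mul_sum]
    apply Finset.sum_congr rfl
    intro z₂ _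
    rw [mul_ite, mul_zero]
  have hI_nonneg : ∀ z₁, 0 ≤ I z₁ := by
    intro z₁
    apply Finset.sum_nonneg
    intro z₂ _
    split_ifs
    · exact binomPMF_nonneg _ hc0 hc1' _
    · exact le_refl 0
  have hI_le_one : ∀ z₁, I z₁ ≤ 1 := by
    intro z₁
    have h1 : I z₁ ≤ ∑ z₂ ∈ range (d - z₁ + 1), binomPMF (d - z₁) c z₂ := by
      apply Finset.sum_le_sum
      intro z₂ hz₂
      split_ifs
      · exact le_refl _
      · exact binomPMF_nonneg _ hc0 hc1' _
    have h2 : ∑ z₂ ∈ range (d - z₁ + 1), binomPMF (d - z₁) c z₂ = 1 := by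
      have := binom_mgf (d - z₁) c 1
      simp only [one_pow, mul_one] at this
      rw [this]; norm_num
    linarith
  -- key bound on I for small z₁
  have hIkey : ∀ z₁ ∈ range (d+1), ¬((p + χ) * d < (z₁:ℝ)) → I z₁ ≤ Bexp := by
    intro z₁ hz₁ hcase
    push_neg at hcase
    have hz₁d : z₁ < d := by
      have h1 : (p + χ) * d = (1 - a) * d := by rw [hadef]; ring
      have h2 : (z₁:ℝ) < d := by nlinarith
      exact_mod_cast h2
    set n : ℕ := d - z₁ with hndef
    have hn : 0 < n := Nat.sub_pos_of_lt hz₁d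
    have hnR : (n:ℝ) = (d:ℝ) - (z₁:ℝ) := by
      rw [hndef]; exact_mod_cast Nat.cast_sub hz₁d.le
    have hnad : a * d ≤ (n:ℝ) := by rw [hnR, hadef]; nlinarith
    set s : ℝ := (d:ℝ)/2 - z₁ with hsdef
    have hs : c * n ≤ s := by
      rw [hsdef, hnR]
      nlinarith [mul_le_mul_of_nonneg_right ha12 hdR.le]
    have hIrw : I z₁ = ∑ z₂ ∈ range (n + 1), (if s < (z₂:ℝ) then binomPMF n c z₂ else 0) := by
      rw [hIdef]
      apply Finset.sum_congr rfl
      intro z₂ _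
      refine if_congr ?_ rfl rfl
      rw [hsdef]
      constructor <;> intro <;> linarith
    have hcher := chernoff_tail n hn c hc0 hc1'
      (binomPMF n c) (fun j _ => binomPMF_nonneg _ hc0 hc1' j)
      (fun x _ => le_of_eq (binom_mgf n c x)) s hs
    rw [hIrw]
    refine le_trans hcher ?_
    rw [hBdef]
    apply Real.exp_le_exp.mpr
    have hnRpos : (0:ℝ) < n := by exact_mod_cast hn
    have hmain : (a * (1 - c) - 1 / 2) ^ 2 * (d:ℝ) / a ≤ (s - c * n)^2 / n := by
      have hgm := gmono (c := c) (d := (d:ℝ)) (ν := a * d) (n := (n:ℝ))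
        hdR.le (mul_pos ha0 hdR) hnad
        (by nlinarith [mul_le_mul_of_nonneg_right ha12 hdR.le])
      have heq1 : (a * d * (1 - c) - (d:ℝ) / 2) ^ 2 / (a * d)
          = (a * (1 - c) - 1 / 2) ^ 2 * (d:ℝ) / a := by
        field_simp
      have heq2 : ((n:ℝ) * (1 - c) - (d:ℝ) / 2) ^ 2 = (s - c * n)^2 := by
        rw [hsdef, hnR]; ring_nf
      rw [heq1, heq2] at hgm
      exact hgm
    calc -2 * (s - c * (n:ℝ)) ^ 2 / (n:ℝ)
        = -2 * ((s - c * (n:ℝ)) ^ 2 / (n:ℝ)) := by ring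
      _ ≤ -2 * ((a * (1 - c) - 1 / 2) ^ 2 * (d:ℝ) / a) := by linarith
      _ = -2 * (a * (1 - c) - 1 / 2) ^ 2 * (d:ℝ) / a := by ring
  -- chernoff for the hypergeometric tail
  have hhypmgf : ∀ x : ℝ, 1 ≤ x →
      ∑ j ∈ range (d+1), hypergeomPMF N m d j * x ^ j ≤ (1 - p + p * x) ^ d :=
    fun x hx => hyp_mgf N m d hN hd hm x hx
  have hhyptail := chernoff_tail d hd0 p hp0 hp1 (hypergeomPMF N m d) hw hhypmgf
    ((p + χ) * d) (by nlinarith)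
  have hhyptail' : ∑ j ∈ range (d+1), (if (p + χ) * d < (j:ℝ) then hypergeomPMF N m d j else 0)
      ≤ Real.exp (-2 * χ ^ 2 * d) := by
    refine le_trans hhyptail (le_of_eq ?_)
    congr 1
    field_simp
    ring
  -- assemble
  calc (∑ z₁ ∈ Finset.range (d + 1), ∑ z₂ ∈ Finset.range (d - z₁ + 1),
        if (d : ℝ) / 2 < (z₁ : ℝ) + (z₂ : ℝ) then
          hypergeomPMF N m d z₁ * binomPMF (d - z₁) c z₂ else 0)
      = ∑ z₁ ∈ range (d+1), hypergeomPMF N m d z₁ * I z₁ := Finset.sum_congr rfl hfacto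
    _ ≤ ∑ z₁ ∈ range (d+1), ((if (p + χ) * d < (z₁:ℝ) then hypergeomPMF N m d z₁ else 0)
          + hypergeomPMF N m d z₁ * Bexp) := by
        apply Finset.sum_le_sum
        intro z₁ hz₁
        by_cases hcase : (p + χ) * d < (z₁:ℝ)
        · rw [if_pos hcase]
          have h1 : hypergeomPMF N m d z₁ * I z₁ ≤ hypergeomPMF N m d z₁ * 1 :=
            mul_le_mul_of_nonneg_left (hI_le_one z₁) (hw z₁ hz₁)
          have h2 : 0 ≤ hypergeomPMF N m d z₁ * Bexp := mul_nonneg (hw z₁ hz₁) hBnonneg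
          linarith
        · rw [if_neg hcase]
          have h1 : hypergeomPMF N m d z₁ * I z₁ ≤ hypergeomPMF N m d z₁ * Bexp :=
            mul_le_mul_of_nonneg_left (hIkey z₁ hz₁ hcase) (hw z₁ hz₁)
          linarith
    _ = (∑ z₁ ∈ range (d+1), (if (p + χ) * d < (z₁:ℝ) then hypergeomPMF N m d z₁ else 0))
          + (∑ z₁ ∈ range (d+1), hypergeomPMF N m d z₁) * Bexp := by
        rw [Finset.sum_add_distrib, Finset.sum_mul]
    _ ≤ Real.exp (-2 * χ ^ 2 * d) + 1 * Bexp := by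
        apply add_le_add hhyptail'
        rw [hyp_total N m d hd hm]
    _ = Real.exp (-2 * χ ^ 2 * d)
        + Real.exp (-2 * ((1 - (m : ℝ) / N - χ) * (1 - c) - 1 / 2) ^ 2 * d
            / (1 - (m : ℝ) / N - χ)) := by
        rw [one_mul, hBdef, hadef, hpdef]
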